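/- Let E = F ⊕ G be a Banach space with closed complementary subspaces, P the projection onto F along G, and A a bounded operator with ‖A‖ ≤ 1, A = I on F, A(G) ⊆ G. Suppose there is a sequence of nonnegative reals (a_k) with ∑ a_k ≤ S < ∞ and ‖A^k − P‖ ≤ a_k for all k ≥ 1. Then for every unit vector v ∈ G, ‖A v − v‖ ≥ 1/(1 + S). -/
import Mathlib


/-- If `A^k` converges to the projection `P` with speed summable to at most `S`, then the
support of the averaging yields a Kazhdan-type bound: every unit vector `v ∈ G` satisfies
`‖A v - v‖ ≥ 1 / (1 + S)`. -/
theorem summable_convergence_gives_spectral_gap {E : Type*} [NormedAddCommGroup E]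
    [NormedSpace ℝ E] [CompleteSpace E] (F G : Submodule ℝ E)
    (hFc : IsClosed (F : Set E)) (hGc : IsClosed (G : Set E))
    (hspan : ∀ v : E, ∃ x ∈ F, ∃ y ∈ G, v = x + y)
    (hdisj : ∀ v : E, v ∈ F → v ∈ G → v = 0)
    (P A : E →L[ℝ] E)
    (hPF : ∀ v ∈ F, P v = v) (hPG : ∀ v ∈ G, P v = 0)
    (hAF : ∀ v ∈ F, A v = v) (hAG : ∀ v ∈ G, A v ∈ G)
    (hA1 : ‖A‖ ≤ 1)
    (a : ℕ → ℝ) (ha0 : ∀ k, 0 ≤ a k) (hsum : Summable a)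
    (S : ℝ) (hS : (∑' k, a k) ≤ S)
    (hak : ∀ k : ℕ, 1 ≤ k → ‖A ^ k - P‖ ≤ a k) :
    ∀ v ∈ G, ‖v‖ = 1 → 1 / (1 + S) ≤ ‖A v - v‖ := by
  intro v hv hv1
  set w : E := v - A v with hw
  have hwrev : ‖A v - v‖ = ‖w‖ := by rw [hw, norm_sub_rev]
  have hwG : w ∈ G := G.sub_mem hv (hAG v hv)
  have hPw : P w = 0 := hPG w hwG
  have hPv : P v = 0 := hPG v hv
  have hS0 : 0 ≤ S := le_trans (tsum_nonneg ha0) hS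
  have h1S : (0:ℝ) < 1 + S := by linarith
  -- norm of A^k w for k ≥ 1
  have hAkw : ∀ k, 1 ≤ k → ‖(A ^ k) w‖ ≤ a k * ‖w‖ := by
    intro k hk
    have h1 : (A ^ k) w = (A ^ k - P) w := by
      simp [ContinuousLinearMap.sub_apply, hPw]
    rw [h1]
    calc ‖(A ^ k - P) w‖ ≤ ‖A ^ k - P‖ * ‖w‖ := (A ^ k - P).le_opNorm w
      _ ≤ a k * ‖w‖ := by
          exact mul_le_mul_of_nonneg_right (hak k hk) (norm_nonneg w)
  -- norm of A^k w with k = 0 included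
  have hAkw' : ∀ k, ‖(A ^ k) w‖ ≤ (if k = 0 then 1 else a k) * ‖w‖ := by
    intro k
    rcases Nat.eq_zero_or_pos k with rfl | hk
    · simp
    · simpa [Nat.pos_iff_ne_zero.mp hk] using hAkw k hk
  -- telescoping sum
  have htel : ∀ n, ∑ k ∈ Finset.range n, (A ^ k) w = v - (A ^ n) v := by
    intro n
    have hterm : ∀ k, (A ^ k) w = (A ^ k) v - (A ^ (k + 1)) v := by
      intro k
      simp [hw, map_sub, pow_succ, ContinuousLinearMap.mul_apply]
    rw [Finset.sum_congr rfl fun k _ => hterm k, Finset.sum_range_sub']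
    simp
  -- sum of coefficients bound
  have hcoef : ∀ n, ∑ k ∈ Finset.range n, (if k = 0 then 1 else a k) ≤ 1 + S := by
    intro n
    have h1 : ∀ k ∈ Finset.range n,
        (if k = 0 then (1:ℝ) else a k) ≤ (if k = 0 then (1:ℝ) else 0) + a k := by
      intro k _
      split_ifs with h
      · linarith [ha0 k]
      · simp
    calc ∑ k ∈ Finset.range n, (if k = 0 then (1:ℝ) else a k)
        ≤ ∑ k ∈ Finset.range n, ((if k = 0 then (1:ℝ) else 0) + a k) :=
          Finset.sum_le_sum h1
      _ = (∑ k ∈ Finset.range n, (if k = 0 then (1:ℝ) else 0))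
            + ∑ k ∈ Finset.range n, a k := Finset.sum_add_distrib
      _ ≤ 1 + S := by
          have h2 : (∑ k ∈ Finset.range n, (if k = 0 then (1:ℝ) else 0)) ≤ 1 := by
            rw [Finset.sum_ite_eq' (Finset.range n) 0 fun _ => (1:ℝ)]
            split_ifs <;> norm_num
          have h3 : ∑ k ∈ Finset.range n, a k ≤ S :=
            le_trans (Summable.sum_le_tsum _ (fun k _ => ha0 k) hsum) hS
          linarith
  -- main bound for each n ≥ 1
  have hmain : ∀ n, 1 ≤ n → 1 ≤ (1 + S) * ‖w‖ + a n := by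
    intro n hn
    have hAnv : ‖(A ^ n) v‖ ≤ a n := by
      have h1 : (A ^ n) v = (A ^ n - P) v := by
        simp [ContinuousLinearMap.sub_apply, hPv]
      rw [h1]
      calc ‖(A ^ n - P) v‖ ≤ ‖A ^ n - P‖ * ‖v‖ := (A ^ n - P).le_opNorm v
        _ = ‖A ^ n - P‖ := by rw [hv1, mul_one]
        _ ≤ a n := hak n hn
    have hsub : ‖v - (A ^ n) v‖ ≤ (1 + S) * ‖w‖ := by
      rw [← htel n]
      calc ‖∑ k ∈ Finset.range n, (A ^ k) w‖
          ≤ ∑ k ∈ Finset.range n, ‖(A ^ k) w‖ := norm_sum_le _ _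
        _ ≤ ∑ k ∈ Finset.range n, (if k = 0 then 1 else a k) * ‖w‖ :=
            Finset.sum_le_sum fun k _ => hAkw' k
        _ = (∑ k ∈ Finset.range n, (if k = 0 then 1 else a k)) * ‖w‖ :=
            (Finset.sum_mul _ _ _).symm
        _ ≤ (1 + S) * ‖w‖ :=
            mul_le_mul_of_nonneg_right (hcoef n) (norm_nonneg w)
    calc (1:ℝ) = ‖v‖ := hv1.symm
      _ ≤ ‖v - (A ^ n) v‖ + ‖(A ^ n) v‖ := by
          simpa using norm_add_le (v - (A ^ n) v) ((A ^ n) v)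
      _ ≤ (1 + S) * ‖w‖ + a n := add_le_add hsub hAnv
  -- pass to the limit
  have hlim : Filter.Tendsto (fun n => (1 + S) * ‖w‖ + a n) Filter.atTop
      (nhds ((1 + S) * ‖w‖ + 0)) :=
    Filter.Tendsto.const_add _ hsum.tendsto_atTop_zero
  have h1le : 1 ≤ (1 + S) * ‖w‖ := by
    have h := ge_of_tendsto (b := (1:ℝ)) hlim
      (by filter_upwards [Filter.eventually_ge_atTop 1] with n hn using hmain n hn)
    simpa using h
  rw [hwrev, div_le_iff₀ h1S]
  linarith [h1le]
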